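/- Let C be a circuit of the quiver Q with multiplicity m (so every cycle in C has length n = l·m where l is the period). Fix a cycle γ = a_n...a_1 in C and set K_C = Σ_{i=1}^n (a_i, a_i^{co}) in the vector space k(Q_1 ⊙ B)_C, with the convention that a summand is zero when a_i^{co} ∉ B. Let Δ_C = Σ_{(a,β) ∈ (Q_1 ⊙ B)_C} (a,β). Then K_C = m · Δ_C. -/

import Mathlib

/-!  Basic combinatorics of a quiver given by source/target maps `s t : A → V`.
A path of positive length is a list of arrows `[a₁, …, aₙ]` written in order of
traversal (so the written path `aₙ … a₁` of the paper corresponds to the list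
`[a₁, …, aₙ]`).  -/

namespace Monomial

variable {V A : Type*}

/-- `l` is a path: consecutive arrows are composable. -/
def IsPath (s t : A → V) (l : List A) : Prop := l.Chain' fun a b => t a = s b

/-- Source of a (nonempty) path. -/
def srcOf (s : A → V) (l : List A) : Option V := l.head?.map s

/-- Target of a (nonempty) path. -/
def tgtOf (t : A → V) (l : List A) : Option V := l.getLast?.map t

/-- `l` is a nontrivial cycle. -/
def IsCycleList (s t : A → V) (l : List A) : Prop :=
  l ≠ [] ∧ IsPath s t l ∧ tgtOf t l = srcOf s l

/-- `Z` is a minimal set of path relations of length at least two. -/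
def MinimalRels (s t : A → V) (Z : Set (List A)) : Prop :=
  ∀ z ∈ Z, IsPath s t z ∧ 2 ≤ z.length ∧ ∀ w ∈ Z, w <:+: z → w = z

/-- `l` belongs to `B`: it is a path containing no subpath from `Z`
(the basis of the monomial algebra, positive length part). -/
def InB (s t : A → V) (Z : Set (List A)) (l : List A) : Prop :=
  IsPath s t l ∧ ∀ z ∈ Z, ¬ z <:+: l

/-- `(a, β)` is a cyclic pair in `Q₁ ⊙ B` (if `β = []` it stands for the
trivial path at `s a = t a`). -/
def PairOK (s t : A → V) (Z : Set (List A)) (p : A × List A) : Prop :=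
  InB s t Z p.2 ∧ IsCycleList s t (p.2 ++ [p.1])

/-- The set `W` of cycles containing precisely one subpath from `Z`,
located at their end (for a written cycle `γ = ξα`, the list is `α ++ ξ`). -/
def InW (s t : A → V) (Z : Set (List A)) (l : List A) : Prop :=
  IsCycleList s t l ∧
    ∃ ξ ∈ Z, (∃ α, l = α ++ ξ) ∧ ∀ z ∈ Z, ∀ p q, l = p ++ z ++ q → z = ξ ∧ q = []

/-- Two cycles are in the same circuit iff they are related by rotation. -/
def RotEquiv (l₁ l₂ : List A) : Prop := ∃ n, l₁.rotate n = l₂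

end Monomial

namespace Monomial

open Finsupp Classical




variable {V A : Type*} {k : Type*} [Field k]

/-- The basis vector of `k(Q₁ ⊙ B)` given by an arrow of a cycle `l` together
with its complement: for the cycle `l = [a₁, …, aₙ]` and index `j`,
this is the pair `(a_{j+1}, a_{j+1}^{co})`, where `a_{j+1}^{co}` is the
complementary path of the arrow `a_{j+1}` in the cycle; by convention it is `0`
when the complement is not in `B`. -/
noncomputable def bAt (s t : A → V) (Z : Set (List A)) (k : Type*) [Field k]
    (l : List A) (j : ℕ) : (A × List A) →₀ k :=
  match (l.rotate (j + 1)).getLast? with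
  | none => 0
  | Option.some a =>
      if InB s t Z ((l.rotate (j + 1)).dropLast) then
        Finsupp.single (a, (l.rotate (j + 1)).dropLast) 1
      else 0

/-- The canonical element `K_C = Σᵢ (aᵢ, aᵢ^{co})` attached to a cycle `γ`. -/
noncomputable def KElt (s t : A → V) (Z : Set (List A)) (k : Type*) [Field k]
    (γ : List A) : (A × List A) →₀ k :=
  ∑ j ∈ Finset.range γ.length, bAt s t Z k γ j

/-- Value of the differential `d₀` on a basis element `(a, β)`:
`d₀(a,β) = (t a, aβ) − (s a, βa)`, where summands whose second component is a
zero path are interpreted as `0` (the vertex component is determined by the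
cycle, so is omitted). -/
noncomputable def d0b (s t : A → V) (Z : Set (List A)) (k : Type*) [Field k]
    (p : A × List A) : List A →₀ k :=
  (if InB s t Z (p.2 ++ [p.1]) then Finsupp.single (p.2 ++ [p.1]) (1 : k) else 0)
    - (if InB s t Z (p.1 :: p.2) then Finsupp.single (p.1 :: p.2) (1 : k) else 0)

/-- The differential `d₀ : k(Q₁ ⊙ B) → k(Q₀ ⊙ B)`. -/
noncomputable def d0map (s t : A → V) (Z : Set (List A)) {k : Type*} [Field k]
    (f : (A × List A) →₀ k) : List A →₀ k :=
  f.sum fun p c => c • d0b s t Z k p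

/-- Value of the differential `d₁` on a basis element `(α, β) ∈ Z ⊙ B`:
for `α = aₙ … a₁` this is `Σᵢ (aᵢ, a_{i-1} … a₁ β aₙ … a_{i+1})`,
with summands whose second component is a zero path interpreted as `0`. -/
noncomputable def d1b (s t : A → V) (Z : Set (List A)) (k : Type*) [Field k]
    (α β : List A) : (A × List A) →₀ k :=
  ∑ j ∈ Finset.range α.length, bAt s t Z k (β ++ α) (β.length + j)

/-- The differential `d₁ : k(Z ⊙ B) → k(Q₁ ⊙ B)`. -/
noncomputable def d1map (s t : A → V) (Z : Set (List A)) {k : Type*} [Field k]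
    (g : (List A × List A) →₀ k) : (A × List A) →₀ k :=
  g.sum fun q c => c • d1b s t Z k q.1 q.2

/-- `(α, β)` is a cyclic pair in `Z ⊙ B`. -/
def ZPairOK (s t : A → V) (Z : Set (List A)) (q : List A × List A) : Prop :=
  q.1 ∈ Z ∧ InB s t Z q.2 ∧ IsCycleList s t (q.2 ++ q.1)

end Monomial


namespace Monomial
variable {V A : Type*}

theorem IsCycleList_rotate_one (s t : A → V) (γ : List A) (h : IsCycleList s t γ) :
    IsCycleList s t (γ.rotate 1) := by
  obtain ⟨hne, hch, hcyc⟩ := h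
  cases γ with
  | nil => exact absurd rfl hne
  | cons a xs =>
    rw [List.rotate_cons_succ, List.rotate_zero]
    refine ⟨by simp, ?_, ?_⟩
    · cases xs with
      | nil => simp [IsPath, List.Chain']
      | cons x xs' =>
        rw [IsPath, List.Chain', List.isChain_append]
        refine ⟨(List.isChain_cons_cons.1 hch).2, List.isChain_singleton _, ?_⟩
        intro y hy z hz
        simp only [List.head?_cons, Option.mem_def, Option.some.injEq] at hz
        subst hz
        simp only [tgtOf, srcOf, List.getLast?_cons_cons] at hcyc
        rw [Option.mem_def.1 hy] at hcyc
        simpa using hcyc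
    · cases xs with
      | nil =>
        simp only [tgtOf, srcOf, List.getLast?_singleton, List.head?_cons] at hcyc ⊢
        simpa using hcyc
      | cons x xs' =>
        simp only [tgtOf, srcOf, List.nil_append]
        rw [List.getLast?_concat]
        have : t a = s x := (List.isChain_cons_cons.1 hch).1
        simp [this]

theorem IsCycleList_rotate (s t : A → V) (γ : List A) (h : IsCycleList s t γ) (r : ℕ) :
    IsCycleList s t (γ.rotate r) := by
  induction r with
  | zero => simpa using h
  | succ r ih =>
    have h2 : γ.rotate (r + 1) = (γ.rotate r).rotate 1 := by
      rw [List.rotate_rotate]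
    rw [h2]
    exact IsCycleList_rotate_one s t _ ih

theorem rotate_cancel (γ : List A) (hne : γ ≠ []) {a b : ℕ} (hab : a ≤ b)
    (h : γ.rotate a = γ.rotate b) : γ.rotate (b - a) = γ := by
  obtain ⟨kk, hk⟩ : ∃ kk, γ.length = kk + 1 :=
    ⟨γ.length - 1, by have := List.length_pos_iff.2 hne; omega⟩
  have h2 := congrArg (fun u : List A => u.rotate (a * kk)) h
  simp only [List.rotate_rotate] at h2
  have e1 : a + a * kk = γ.length * a := by rw [hk]; ring
  have e2 : b + a * kk = γ.length * a + (b - a) := by rw [hk]; zify [hab]; ring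
  rw [e1, e2, List.rotate_length_mul, ← List.rotate_rotate, List.rotate_length_mul] at h2
  exact h2.symm

open Classical in
theorem bAt_eq {k : Type*} [Field k] (s t : A → V) (Z : Set (List A)) (γ : List A) (j : ℕ)
    (h2 : γ.rotate (j + 1) ≠ []) :
    bAt s t Z k γ j =
      if InB s t Z ((γ.rotate (j + 1)).dropLast) then
        Finsupp.single ((γ.rotate (j + 1)).getLast h2, (γ.rotate (j + 1)).dropLast) (1 : k)
      else 0 := by
  unfold bAt
  rw [List.getLast?_eq_getLast h2]

theorem bAt_congr {k : Type*} [Field k] (s t : A → V) (Z : Set (List A)) (γ : List A)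
    {j j' : ℕ} (h : γ.rotate (j + 1) = γ.rotate (j' + 1)) :
    bAt s t Z k γ j = bAt s t Z k γ j' := by
  unfold bAt
  rw [h]

end Monomial

open Monomial in
/-- if the circuit of the cycle `γ` has period `l` and multiplicity
`m` (so `γ` has length `n = l·m`), then `K_C = m • Δ_C`, where
`Δ_C` is the sum of all basis vectors of `k(Q₁ ⊙ B)_C`. -/
theorem K_eq_mult_smul_Delta {V A : Type*} {k : Type*} [Field k]
    (s t : A → V) (Z : Set (List A)) (hZ : MinimalRels s t Z)
    (γ : List A) (hγ : IsCycleList s t γ)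
    (l m : ℕ) (hl : 0 < l) (hrot : γ.rotate l = γ)
    (hmin : ∀ j, 0 < j → j < l → γ.rotate j ≠ γ)
    (hm : γ.length = l * m)
    (CodC : Set (A × List A))
    (hCodC : CodC = {p | PairOK s t Z p ∧ RotEquiv (p.2 ++ [p.1]) γ})
    (hfin : CodC.Finite) :
    KElt s t Z k γ = (m : k) • ∑ p ∈ hfin.toFinset, Finsupp.single p (1 : k) := by
  classical
  obtain ⟨hne, hpath, hcyc⟩ := hγ
  have hnpos : 0 < γ.length := List.length_pos_iff.2 hne
  have hper1 : ∀ x : ℕ, γ.rotate (x + l) = γ.rotate x := by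
    intro x
    rw [add_comm, ← List.rotate_rotate, hrot]
  have hper : ∀ kk x : ℕ, γ.rotate (x + l * kk) = γ.rotate x := by
    intro kk
    induction kk with
    | zero => simp
    | succ kk ih =>
      intro x
      have e : x + l * (kk + 1) = (x + l) + l * kk := by ring
      rw [e, ih, hper1]
  have hmod : ∀ x : ℕ, γ.rotate x = γ.rotate (x % l) := by
    intro x
    conv_lhs => rw [← Nat.mod_add_div x l]
    exact hper _ _
  have hrotne : ∀ r : ℕ, γ.rotate r ≠ [] := fun r => by
    simp [List.rotate_eq_nil_iff, hne]
  set f : ℕ → A × List A := fun r =>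
    ((γ.rotate (r + 1)).getLast (hrotne (r + 1)), (γ.rotate (r + 1)).dropLast) with hf
  have hfrec : ∀ r, (f r).2 ++ [(f r).1] = γ.rotate (r + 1) := fun r =>
    List.dropLast_append_getLast (hrotne (r + 1))
  have hkey : ∀ r1 r2, r1 < l → r2 < l → r1 ≤ r2 →
      γ.rotate (r1 + 1) = γ.rotate (r2 + 1) → r1 = r2 := by
    intro r1 r2 h1 h2 hle he
    by_contra hne'
    have hpos : 0 < r2 - r1 := by omega
    have hc := rotate_cancel γ hne (by omega : r1 + 1 ≤ r2 + 1) he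
    have h3 : (r2 + 1) - (r1 + 1) = r2 - r1 := by omega
    rw [h3] at hc
    exact hmin _ hpos (by omega) hc
  have hinj : ∀ r1 ∈ Finset.range l, ∀ r2 ∈ Finset.range l, f r1 = f r2 → r1 = r2 := by
    intro r1 hr1 r2 hr2 he
    rw [Finset.mem_range] at hr1 hr2
    have hδ : γ.rotate (r1 + 1) = γ.rotate (r2 + 1) := by
      rw [← hfrec r1, ← hfrec r2, he]
    rcases le_total r1 r2 with h | h
    · exact hkey r1 r2 hr1 hr2 h hδ
    · exact (hkey r2 r1 hr2 hr1 h hδ.symm).symm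
  set S : Finset ℕ :=
    (Finset.range l).filter (fun r => InB s t Z ((γ.rotate (r + 1)).dropLast)) with hS
  have himg : hfin.toFinset = S.image f := by
    ext p
    rw [Set.Finite.mem_toFinset, hCodC]
    simp only [Set.mem_setOf_eq, Finset.mem_image, hS, Finset.mem_filter, Finset.mem_range]
    constructor
    · rintro ⟨⟨hB, hcyc'⟩, q, hq⟩
      set δ := p.2 ++ [p.1] with hδ
      have hδne : δ ≠ [] := by simp [hδ]
      have hlen : δ.length = γ.length := by
        rw [← hq, List.length_rotate]
      obtain ⟨kk, hk⟩ : ∃ kk, γ.length = kk + 1 := ⟨γ.length - 1, by omega⟩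
      have h2 := congrArg (fun u : List A => u.rotate (q * kk)) hq
      simp only [List.rotate_rotate] at h2
      have e1 : q + q * kk = δ.length * q := by rw [hlen, hk]; ring
      rw [e1, List.rotate_length_mul] at h2
      set w := q * kk with hw
      set r := (w + (l - 1)) % l with hr
      have hrl : r < l := Nat.mod_lt _ hl
      have hrw : γ.rotate (r + 1) = δ := by
        rw [hmod (r + 1), hr, Nat.mod_add_mod]
        have e2 : w + (l - 1) + 1 = w + l := by omega
        rw [e2, Nat.add_mod_right, ← hmod w, ← h2]
      have h1 : (γ.rotate (r + 1)).dropLast = p.2 := by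
        rw [hrw, hδ, List.dropLast_concat]
      refine ⟨r, ⟨hrl, ?_⟩, ?_⟩
      · rw [h1]; exact hB
      · have hLast : (γ.rotate (r + 1)).getLast (hrotne _) = p.1 := by
          have h4 : (γ.rotate (r + 1)).getLast? = some p.1 := by
            rw [hrw, hδ, List.getLast?_concat]
          rw [List.getLast?_eq_getLast (hrotne _)] at h4
          exact Option.some.inj h4
        show ((γ.rotate (r + 1)).getLast (hrotne (r + 1)), (γ.rotate (r + 1)).dropLast) = p
        rw [Prod.ext_iff]
        exact ⟨hLast, h1⟩
    · rintro ⟨r, ⟨hrl, hrB⟩, rfl⟩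
      refine ⟨⟨hrB, ?_⟩, ?_⟩
      · rw [hfrec r]
        exact IsCycleList_rotate s t γ ⟨hne, hpath, hcyc⟩ (r + 1)
      · rw [RotEquiv]
        rw [hfrec r]
        refine ⟨(r + 1) * (γ.length - 1), ?_⟩
        rw [List.rotate_rotate]
        have e3 : (r + 1) + (r + 1) * (γ.length - 1) = γ.length * (r + 1) := by
          obtain ⟨kk, hk⟩ : ∃ kk, γ.length = kk + 1 := ⟨γ.length - 1, by omega⟩
          rw [hk, Nat.add_sub_cancel]; ring
        rw [e3, List.rotate_length_mul]
  have hstep : ∀ M : ℕ, (∑ j ∈ Finset.range (l * M), bAt s t Z k γ j)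
      = M • ∑ r ∈ Finset.range l, bAt s t Z k γ r := by
    intro M
    induction M with
    | zero => simp
    | succ M ih =>
      have e : l * (M + 1) = l * M + l := by ring
      rw [e, Finset.sum_range_add, ih, succ_nsmul]
      congr 1
      refine Finset.sum_congr rfl fun x hx => ?_
      apply bAt_congr
      have e2 : l * M + x + 1 = (x + 1) + l * M := by ring
      rw [e2, hper]
  have hbs : ∑ r ∈ Finset.range l, bAt s t Z k γ r
      = ∑ r ∈ S, Finsupp.single (f r) (1 : k) := by
    rw [hS, Finset.sum_filter]
    refine Finset.sum_congr rfl fun r hr => ?_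
    rw [bAt_eq s t Z γ r (hrotne _)]
  have hinj' : ∀ x ∈ S, ∀ y ∈ S, f x = f y → x = y := by
    intro x hx y hy h
    exact hinj x (Finset.mem_of_mem_filter x hx) y (Finset.mem_of_mem_filter y hy) h
  rw [himg, Finset.sum_image hinj', ← hbs, Nat.cast_smul_eq_nsmul, KElt, hm, hstep m]
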